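/- Let X ⊆ ℝⁿ be nonempty, closed, and convex, let p = (p_i) and q = (q_i) be probability vectors on {1,…,m} with strictly positive components, and set r := ∑_{i=1}^m p_i²/q_i. Let B_1,…,B_m : ℝⁿ → ℝⁿ each be L-Lipschitz, define A_i := (p_i/q_i) B_i, and suppose B := ∑_{i=1}^m p_i B_i is μ-strongly monotone with 0 < μ ≤ L. Let x* ∈ ℝⁿ satisfy x* = Π_X(x* − γ B(x*)), where M ≥ 1 is an integer and 0 < γ < 2μ/((1 + 2r + 2Mr)L²). Let I_0,…,I_{M−1} be i.i.d. {1,…,m}-valued random variables with P(I_l = i) = q_i. Fix y_0 ∈ X and define the SVRG inner iterates of one epoch by ỹ_0 := y_0 and ỹ_{l+1} := Π_X( ỹ_l − γ( A_{I_l}(ỹ_l) − A_{I_l}(y_0) + B(y_0) ) ) for 0 ≤ l < M. Then E[‖ỹ_M − x*‖₂²] ≤ (1 − 2γμ + (1 + 2r + 2Mr)γ²L²) ‖y_0 − x*‖₂². -/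

import Mathlib

open scoped RealInnerProductSpace

section Aux

variable {F : Type*} [NormedAddCommGroup F] [InnerProductSpace ℝ F]

/-- variational inequality for a nearest-point map onto a convex set -/
lemma my_proj_vi {X : Set F} (hXcv : Convex ℝ X)
    (proj : F → F) (hmem : ∀ z, proj z ∈ X)
    (hnear : ∀ z, ∀ w ∈ X, dist z (proj z) ≤ dist z w) :
    ∀ z, ∀ w ∈ X, ⟪z - proj z, w - proj z⟫ ≤ 0 := by
  intro z w hw
  haveI : Nonempty X := ⟨⟨proj z, hmem z⟩⟩
  have h : ‖z - proj z‖ = ⨅ w : X, ‖z - w‖ := by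
    apply le_antisymm
    · exact le_ciInf fun ⟨w, hw⟩ => by
        simpa [dist_eq_norm] using hnear z w hw
    · have hbdd : BddBelow (Set.range fun w : X => ‖z - (w : F)‖) := by
        refine ⟨0, ?_⟩
        rintro x ⟨w, rfl⟩
        exact norm_nonneg _
      exact ciInf_le hbdd ⟨proj z, hmem z⟩
  exact (norm_eq_iInf_iff_real_inner_le_zero hXcv (hmem z)).1 h w hw

lemma my_proj_nonexp {X : Set F} (hXcv : Convex ℝ X)
    (proj : F → F) (hmem : ∀ z, proj z ∈ X)
    (hnear : ∀ z, ∀ w ∈ X, dist z (proj z) ≤ dist z w) :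
    ∀ u v, ‖proj u - proj v‖ ≤ ‖u - v‖ := by
  intro u v
  have h1 := my_proj_vi hXcv proj hmem hnear u (proj v) (hmem v)
  have h2 := my_proj_vi hXcv proj hmem hnear v (proj u) (hmem u)
  have key : ‖proj u - proj v‖ ^ 2 ≤ ⟪u - v, proj u - proj v⟫ := by
    have e1 : ⟪u - proj u, proj v - proj u⟫ + ⟪v - proj v, proj u - proj v⟫
        = ⟪u - v, proj v - proj u⟫ + ‖proj u - proj v‖ ^ 2 := by
      rw [← real_inner_self_eq_norm_sq]
      simp only [inner_sub_left, inner_sub_right]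
      linarith [real_inner_comm u (proj v), real_inner_comm u (proj u),
        real_inner_comm v (proj u), real_inner_comm v (proj v),
        real_inner_comm (proj u) (proj v)]
    have e2 : ⟪u - v, proj v - proj u⟫ = - ⟪u - v, proj u - proj v⟫ := by
      rw [← inner_neg_right]; congr 1; abel
    nlinarith [h1, h2]
  have h3 := real_inner_le_norm (u - v) (proj u - proj v)
  nlinarith [norm_nonneg (proj u - proj v), norm_nonneg (u - v)]

/-- weighted variance identity -/
lemma my_wvar {m : ℕ} (q : Fin m → ℝ) (hqs : ∑ i, q i = 1) (v : Fin m → F) (vbar : F)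
    (hv : ∑ i, q i • v i = vbar) :
    ∑ i, q i * ‖v i‖ ^ 2 = ∑ i, q i * ‖v i - vbar‖ ^ 2 + ‖vbar‖ ^ 2 := by
  have hib : ∑ i, q i * ⟪v i, vbar⟫ = ‖vbar‖ ^ 2 := by
    rw [← real_inner_self_eq_norm_sq, ← hv, sum_inner]
    exact Finset.sum_congr rfl fun i _ => (real_inner_smul_left _ _ _).symm
  have : ∑ i, q i * ‖v i - vbar‖ ^ 2
      = ∑ i, (q i * ‖v i‖ ^ 2 - 2 * (q i * ⟪v i, vbar⟫) + q i * ‖vbar‖ ^ 2) := by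
    refine Finset.sum_congr rfl fun i _ => ?_
    rw [norm_sub_sq_real]; ring
  rw [this, Finset.sum_add_distrib, Finset.sum_sub_distrib, ← Finset.mul_sum, hib,
    ← Finset.sum_mul, hqs]
  ring

end Aux

/-- deterministic unfolding of the recursion along a tuple of indices -/
def Zseq {α β : Type*} (F : α → β → α) (y0 : α) : (l : ℕ) → (Fin l → β) → α
  | 0, _ => y0
  | (l+1), t => F (Zseq F y0 l (fun j => t j.castSucc)) (t (Fin.last l))

lemma my_weight_sum {m : ℕ} (q : Fin m → ℝ) (hqs : ∑ i, q i = 1) :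
    ∀ l : ℕ, ∑ t : Fin l → Fin m, (∏ j, q (t j)) = 1 := by
  intro l
  induction l with
  | zero =>
      rw [Fintype.sum_unique]
      simp
  | succ l ih =>
      rw [← Fintype.sum_equiv (Fin.snocEquiv (fun _ => Fin m))
        (fun p => ∏ j, q (Fin.snocEquiv (fun _ => Fin m) p j))
        (fun t => ∏ j, q (t j)) (fun p => rfl)]
      rw [Fintype.sum_prod_type]
      have hprod : ∀ (i : Fin m) (t : Fin l → Fin m),
          (∏ j, q (Fin.snocEquiv (fun _ => Fin m) (i, t) j))
            = (∏ j, q (t j)) * q i := by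
        intro i t
        rw [Fin.prod_univ_castSucc]
        simp [Fin.snocEquiv]
      calc ∑ i, ∑ t : Fin l → Fin m, (∏ j, q (Fin.snocEquiv (fun _ => Fin m) (i, t) j))
          = ∑ i, ∑ t : Fin l → Fin m, (∏ j, q (t j)) * q i := by
            refine Finset.sum_congr rfl fun i _ => Finset.sum_congr rfl fun t _ => hprod i t
        _ = ∑ i : Fin m, 1 * q i := by
            refine Finset.sum_congr rfl fun i _ => ?_
            rw [← Finset.sum_mul, ih]
        _ = 1 := by simp [hqs]

lemma my_Zseq_sum_le {m : ℕ} {α : Type*} (F : α → Fin m → α) (y0 : α)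
    (q : Fin m → ℝ) (hq : ∀ i, 0 ≤ q i) (hqs : ∑ i, q i = 1)
    (φ : α → ℝ) (hφ : ∀ a, 0 ≤ φ a)
    (c K : ℝ) (hc0 : 0 ≤ c) (hc1 : c ≤ 1) (hK : 0 ≤ K)
    (hstep : ∀ a, ∑ i, q i * φ (F a i) ≤ c * φ a + K) :
    ∀ l : ℕ, ∑ t : Fin l → Fin m, (∏ j, q (t j)) * φ (Zseq F y0 l t)
      ≤ c ^ l * φ y0 + l * K := by
  intro l
  induction l with
  | zero =>
      rw [Fintype.sum_unique]
      simp [Zseq]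
  | succ l ih =>
      have hZ : ∀ (i : Fin m) (t : Fin l → Fin m),
          Zseq F y0 (l+1) (Fin.snocEquiv (fun _ => Fin m) (i, t)) = F (Zseq F y0 l t) i := by
        intro i t
        simp only [Zseq]
        simp [Fin.snocEquiv]
      have hprod : ∀ (i : Fin m) (t : Fin l → Fin m),
          (∏ j, q (Fin.snocEquiv (fun _ => Fin m) (i, t) j))
            = (∏ j, q (t j)) * q i := by
        intro i t
        rw [Fin.prod_univ_castSucc]
        simp [Fin.snocEquiv]
      rw [← Fintype.sum_equiv (Fin.snocEquiv (fun _ => Fin m))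
        (fun p => (∏ j, q (Fin.snocEquiv (fun _ => Fin m) p j))
          * φ (Zseq F y0 (l+1) (Fin.snocEquiv (fun _ => Fin m) p)))
        (fun t => (∏ j, q (t j)) * φ (Zseq F y0 (l+1) t)) (fun p => rfl)]
      rw [Fintype.sum_prod_type]
      have step1 : ∀ i : Fin m,
          (∑ t : Fin l → Fin m, (∏ j, q (Fin.snocEquiv (fun _ => Fin m) (i, t) j))
            * φ (Zseq F y0 (l+1) (Fin.snocEquiv (fun _ => Fin m) (i, t))))
          = ∑ t : Fin l → Fin m, (∏ j, q (t j)) * (q i * φ (F (Zseq F y0 l t) i)) := by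
        intro i
        refine Finset.sum_congr rfl fun t _ => ?_
        rw [hZ, hprod]; ring
      calc (∑ i, ∑ t : Fin l → Fin m, (∏ j, q (Fin.snocEquiv (fun _ => Fin m) (i, t) j))
            * φ (Zseq F y0 (l+1) (Fin.snocEquiv (fun _ => Fin m) (i, t))))
          = ∑ i, ∑ t : Fin l → Fin m, (∏ j, q (t j)) * (q i * φ (F (Zseq F y0 l t) i)) :=
            Finset.sum_congr rfl fun i _ => step1 i
        _ = ∑ t : Fin l → Fin m, ∑ i, (∏ j, q (t j)) * (q i * φ (F (Zseq F y0 l t) i)) :=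
            Finset.sum_comm
        _ = ∑ t : Fin l → Fin m, (∏ j, q (t j)) * (∑ i, q i * φ (F (Zseq F y0 l t) i)) := by
            refine Finset.sum_congr rfl fun t _ => ?_
            rw [Finset.mul_sum]
        _ ≤ ∑ t : Fin l → Fin m, (∏ j, q (t j)) * (c * φ (Zseq F y0 l t) + K) := by
            refine Finset.sum_le_sum fun t _ => ?_
            exact mul_le_mul_of_nonneg_left (hstep _)
              (Finset.prod_nonneg fun j _ => hq _)
        _ = c * (∑ t : Fin l → Fin m, (∏ j, q (t j)) * φ (Zseq F y0 l t))
            + K * (∑ t : Fin l → Fin m, (∏ j, q (t j))) := by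
            rw [Finset.mul_sum, Finset.mul_sum, ← Finset.sum_add_distrib]
            refine Finset.sum_congr rfl fun t _ => ?_
            ring
        _ ≤ c ^ (l+1) * φ y0 + (l+1 : ℕ) * K := by
            rw [my_weight_sum q hqs l, mul_one]
            have h1 : c * (∑ t : Fin l → Fin m, (∏ j, q (t j)) * φ (Zseq F y0 l t))
                ≤ c * (c ^ l * φ y0 + l * K) := mul_le_mul_of_nonneg_left ih hc0
            have h2 : c * ((l : ℝ) * K) ≤ (l : ℝ) * K := by
              have : 0 ≤ (l : ℝ) * K := mul_nonneg (Nat.cast_nonneg l) hK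
              nlinarith
            have h3 : c * (c ^ l * φ y0 + l * K) = c ^ (l+1) * φ y0 + c * ((l:ℝ) * K) := by
              ring
            push_cast
            linarith [h1, h2, h3]
open MeasureTheory ProbabilityTheory
open scoped RealInnerProductSpace ENNReal

set_option maxHeartbeats 4000000 in
theorem stmt_13 {n m : ℕ} (hm : 0 < m)
    (X : Set (EuclideanSpace ℝ (Fin n)))
    (hXne : X.Nonempty) (hXcl : IsClosed X) (hXcv : Convex ℝ X)
    (p q : Fin m → ℝ)
    (hp : ∀ i, 0 < p i) (hq : ∀ i, 0 < q i)
    (hps : ∑ i, p i = 1) (hqs : ∑ i, q i = 1)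
    (r : ℝ) (hr : r = ∑ i, (p i) ^ 2 / q i)
    (B : Fin m → EuclideanSpace ℝ (Fin n) → EuclideanSpace ℝ (Fin n))
    (L μ : ℝ) (hμ : 0 < μ) (hμL : μ ≤ L)
    (hLip : ∀ i x y, ‖B i x - B i y‖ ≤ L * ‖x - y‖)
    (A : Fin m → EuclideanSpace ℝ (Fin n) → EuclideanSpace ℝ (Fin n))
    (hA : ∀ i x, A i x = (p i / q i) • B i x)
    (Bbar : EuclideanSpace ℝ (Fin n) → EuclideanSpace ℝ (Fin n))
    (hBbar : ∀ x, Bbar x = ∑ i, p i • B i x)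
    (hmono : ∀ x y, μ * ‖x - y‖ ^ 2 ≤ ⟪Bbar x - Bbar y, x - y⟫)
    (proj : EuclideanSpace ℝ (Fin n) → EuclideanSpace ℝ (Fin n))
    (hproj_mem : ∀ z, proj z ∈ X)
    (hproj_near : ∀ z, ∀ w ∈ X, dist z (proj z) ≤ dist z w)
    (M : ℕ) (hM : 1 ≤ M)
    (γ : ℝ) (hγ0 : 0 < γ)
    (hγ : γ < 2 * μ / ((1 + 2 * r + 2 * M * r) * L ^ 2))
    (xstar : EuclideanSpace ℝ (Fin n))
    (hfix : xstar = proj (xstar - γ • Bbar xstar))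
    {Ω : Type*} [MeasurableSpace Ω] (P : Measure Ω) [IsProbabilityMeasure P]
    (I : Fin M → Ω → Fin m) (hImeas : ∀ l, Measurable (I l))
    (hIindep : iIndepFun I P)
    (hIdist : ∀ l i, P {ω | I l ω = i} = ENNReal.ofReal (q i))
    (y0 : EuclideanSpace ℝ (Fin n)) (hy0X : y0 ∈ X)
    (ytil : ℕ → Ω → EuclideanSpace ℝ (Fin n))
    (hytil0 : ∀ ω, ytil 0 ω = y0)
    (hytilrec : ∀ l : ℕ, ∀ hl : l < M, ∀ ω,
      ytil (l + 1) ω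
        = proj (ytil l ω
            - γ • (A (I ⟨l, hl⟩ ω) (ytil l ω) - A (I ⟨l, hl⟩ ω) y0 + Bbar y0))) :
    ∫⁻ ω, ENNReal.ofReal (‖ytil M ω - xstar‖ ^ 2) ∂P
      ≤ ENNReal.ofReal
          ((1 - 2 * γ * μ + (1 + 2 * r + 2 * M * r) * γ ^ 2 * L ^ 2)
            * ‖y0 - xstar‖ ^ 2) := by
  classical
  have hL : 0 < L := lt_of_lt_of_le hμ hμL
  have hrpos : 0 ≤ r := by
    rw [hr]; exact Finset.sum_nonneg fun i _ => div_nonneg (sq_nonneg _) (hq i).le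
  set D0 : ℝ := ‖y0 - xstar‖ ^ 2 with hD0
  have hD0nn : 0 ≤ D0 := sq_nonneg _
  set c : ℝ := 1 - 2 * γ * μ + (1 + 2 * r) * γ ^ 2 * L ^ 2 with hc
  set K : ℝ := 2 * r * γ ^ 2 * L ^ 2 * D0 with hKdef
  have hKnn : 0 ≤ K := by
    rw [hKdef]
    have h1 : (0:ℝ) ≤ 2 * r := by linarith
    have := mul_nonneg (mul_nonneg (mul_nonneg h1 (sq_nonneg γ)) (sq_nonneg L)) hD0nn
    linarith [this]
  have hc0 : 0 ≤ c := by
    have hμ2L2 : μ ^ 2 ≤ L ^ 2 := by nlinarith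
    have h1 : 0 ≤ γ ^ 2 * (L ^ 2 - μ ^ 2) := mul_nonneg (sq_nonneg γ) (by linarith)
    have h2 : 0 ≤ 2 * r * γ ^ 2 * L ^ 2 :=
      mul_nonneg (mul_nonneg (by linarith : (0:ℝ) ≤ 2 * r) (sq_nonneg γ)) (sq_nonneg L)
    rw [hc]; nlinarith [sq_nonneg (1 - γ * μ)]
  have hMc : (0:ℝ) ≤ (M:ℝ) := Nat.cast_nonneg M
  have hc1 : c ≤ 1 := by
    have hden : 0 < (1 + 2 * r + 2 * (M:ℝ) * r) := by nlinarith
    have hdenL : 0 < (1 + 2 * r + 2 * (M:ℝ) * r) * L ^ 2 := mul_pos hden (pow_pos hL 2)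
    have hγ2 : γ * ((1 + 2 * r + 2 * (M:ℝ) * r) * L ^ 2) < 2 * μ := (lt_div_iff₀ hdenL).mp hγ
    have hγ3 : γ * (γ * ((1 + 2 * r + 2 * (M:ℝ) * r) * L ^ 2)) < γ * (2 * μ) :=
      mul_lt_mul_of_pos_left hγ2 hγ0
    have hMr : 0 ≤ 2 * (M:ℝ) * r * γ ^ 2 * L ^ 2 :=
      mul_nonneg (mul_nonneg (mul_nonneg (by nlinarith : (0:ℝ) ≤ 2 * (M:ℝ)) hrpos)
        (sq_nonneg γ)) (sq_nonneg L)
    rw [hc]; nlinarith [hγ3, hMr]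
  have hne := my_proj_nonexp hXcv proj hproj_mem hproj_near
  set Fst : EuclideanSpace ℝ (Fin n) → Fin m → EuclideanSpace ℝ (Fin n) :=
    fun y i => proj (y - γ • (A i y - A i y0 + Bbar y0)) with hFst
  have hqA : ∀ z, ∑ i, q i • A i z = Bbar z := by
    intro z
    rw [hBbar]
    refine Finset.sum_congr rfl fun i _ => ?_
    rw [hA, smul_smul]
    congr 1
    rw [mul_comm, div_mul_cancel₀ _ (hq i).ne']
  -- the per-point conditional-expectation step
  have hstep : ∀ y, ∑ i, q i * ‖Fst y i - xstar‖ ^ 2 ≤ c * ‖y - xstar‖ ^ 2 + K := by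
    intro y
    set e : EuclideanSpace ℝ (Fin n) := y - xstar with he
    set v : Fin m → EuclideanSpace ℝ (Fin n) :=
      fun i => A i y - A i y0 + Bbar y0 - Bbar xstar with hv
    set u : Fin m → EuclideanSpace ℝ (Fin n) := fun i => A i y - A i y0 with hu
    have hvsum : ∑ i, q i • v i = Bbar y - Bbar xstar := by
      have h1 : ∀ i, q i • v i
          = q i • A i y - q i • A i y0 + q i • Bbar y0 - q i • Bbar xstar := by
        intro i; rw [hv]; simp [smul_sub, smul_add]
      rw [Finset.sum_congr rfl fun i _ => h1 i, Finset.sum_sub_distrib,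
        Finset.sum_add_distrib, Finset.sum_sub_distrib,
        ← Finset.sum_smul, ← Finset.sum_smul, hqs, hqA, hqA, one_smul, one_smul]
      abel
    have husum : ∑ i, q i • u i = Bbar y - Bbar y0 := by
      have h1 : ∀ i, q i • u i = q i • A i y - q i • A i y0 := by
        intro i; rw [hu]; simp [smul_sub]
      rw [Finset.sum_congr rfl fun i _ => h1 i, Finset.sum_sub_distrib, hqA, hqA]
    have hinner : ∑ i, q i * ⟪v i, e⟫ = ⟪Bbar y - Bbar xstar, e⟫ := by
      rw [← hvsum, sum_inner]
      exact Finset.sum_congr rfl fun i _ => (real_inner_smul_left _ _ _).symm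
    have hvar := my_wvar q hqs v (Bbar y - Bbar xstar) hvsum
    have huvar := my_wvar q hqs u (Bbar y - Bbar y0) husum
    have hvu : ∀ i, v i - (Bbar y - Bbar xstar) = u i - (Bbar y - Bbar y0) := by
      intro i; simp only [hv, hu]; abel
    have hVle : ∑ i, q i * ‖v i - (Bbar y - Bbar xstar)‖ ^ 2 ≤ ∑ i, q i * ‖u i‖ ^ 2 := by
      rw [Finset.sum_congr rfl fun i _ => by rw [hvu i]]
      nlinarith [huvar, sq_nonneg ‖Bbar y - Bbar y0‖]
    have hqiu : ∀ i, q i * ‖u i‖ ^ 2 ≤ p i ^ 2 / q i * (L ^ 2 * ‖y - y0‖ ^ 2) := by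
      intro i
      have h1 : ‖u i‖ = (p i / q i) * ‖B i y - B i y0‖ := by
        rw [hu]
        show ‖A i y - A i y0‖ = _
        rw [hA, hA, ← smul_sub, norm_smul, Real.norm_eq_abs,
          abs_of_nonneg (div_nonneg (hp i).le (hq i).le)]
      have h2 : ‖B i y - B i y0‖ ^ 2 ≤ L ^ 2 * ‖y - y0‖ ^ 2 := by
        nlinarith [hLip i y y0, norm_nonneg (B i y - B i y0), norm_nonneg (y - y0),
          mul_nonneg hL.le (norm_nonneg (y - y0))]
      have h3 : q i * ‖u i‖ ^ 2 = p i ^ 2 / q i * ‖B i y - B i y0‖ ^ 2 := by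
        have hqne : q i ≠ 0 := (hq i).ne'
        rw [h1]; field_simp
      rw [h3]
      exact mul_le_mul_of_nonneg_left h2 (div_nonneg (sq_nonneg _) (hq i).le)
    have hsumu : ∑ i, q i * ‖u i‖ ^ 2 ≤ r * (L ^ 2 * ‖y - y0‖ ^ 2) := by
      calc ∑ i, q i * ‖u i‖ ^ 2
          ≤ ∑ i, p i ^ 2 / q i * (L ^ 2 * ‖y - y0‖ ^ 2) :=
            Finset.sum_le_sum fun i _ => hqiu i
        _ = r * (L ^ 2 * ‖y - y0‖ ^ 2) := by rw [hr, Finset.sum_mul]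
    have hyy0 : ‖y - y0‖ ^ 2 ≤ 2 * ‖e‖ ^ 2 + 2 * D0 := by
      have h := norm_sub_le_norm_sub_add_norm_sub y xstar y0
      have h2 : ‖xstar - y0‖ = ‖y0 - xstar‖ := norm_sub_rev _ _
      rw [he, hD0]
      rw [h2] at h
      nlinarith [h, norm_nonneg (y - xstar), norm_nonneg (y0 - xstar), norm_nonneg (y - y0),
        sq_nonneg (‖y - xstar‖ - ‖y0 - xstar‖)]
    have hvbarnorm : ‖Bbar y - Bbar xstar‖ ≤ L * ‖e‖ := by
      have hBd : Bbar y - Bbar xstar = ∑ i, p i • (B i y - B i xstar) := by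
        rw [hBbar, hBbar, ← Finset.sum_sub_distrib]
        exact Finset.sum_congr rfl fun i _ => (smul_sub _ _ _).symm
      rw [hBd, he]
      calc ‖∑ i, p i • (B i y - B i xstar)‖
          ≤ ∑ i, ‖p i • (B i y - B i xstar)‖ := norm_sum_le _ _
        _ ≤ ∑ i, p i * (L * ‖y - xstar‖) := by
            refine Finset.sum_le_sum fun i _ => ?_
            rw [norm_smul, Real.norm_eq_abs, abs_of_nonneg (hp i).le]
            exact mul_le_mul_of_nonneg_left (hLip i y xstar) (hp i).le
        _ = L * ‖y - xstar‖ := by rw [← Finset.sum_mul, hps, one_mul]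
    have hmono' : μ * ‖e‖ ^ 2 ≤ ⟪Bbar y - Bbar xstar, e⟫ := by
      rw [he]; exact hmono y xstar
    have hFi : ∀ i, ‖Fst y i - xstar‖ ^ 2 ≤ ‖e - γ • v i‖ ^ 2 := by
      intro i
      have h2 : (y - γ • (A i y - A i y0 + Bbar y0)) - (xstar - γ • Bbar xstar)
          = e - γ • v i := by
        rw [he, hv]
        simp only [smul_sub, smul_add]
        abel
      have h1 : ‖Fst y i - xstar‖ ≤ ‖e - γ • v i‖ := by
        rw [← h2, hFst]
        conv_lhs => rw [hfix]
        exact hne _ _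
      exact pow_le_pow_left₀ (norm_nonneg _) h1 2
    have hexp : ∀ i, ‖e - γ • v i‖ ^ 2
        = ‖e‖ ^ 2 - 2 * γ * ⟪v i, e⟫ + γ ^ 2 * ‖v i‖ ^ 2 := by
      intro i
      rw [norm_sub_sq_real, real_inner_smul_right, norm_smul, Real.norm_eq_abs,
        mul_pow, sq_abs, real_inner_comm]
      ring
    have hSbound : ∑ i, q i * ‖v i‖ ^ 2
        ≤ (1 + 2 * r) * L ^ 2 * ‖e‖ ^ 2 + 2 * r * L ^ 2 * D0 := by
      have h1 : ∑ i, q i * ‖v i - (Bbar y - Bbar xstar)‖ ^ 2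
          ≤ r * (L ^ 2 * (2 * ‖e‖ ^ 2 + 2 * D0)) := by
        calc ∑ i, q i * ‖v i - (Bbar y - Bbar xstar)‖ ^ 2
            ≤ r * (L ^ 2 * ‖y - y0‖ ^ 2) := le_trans hVle hsumu
          _ ≤ r * (L ^ 2 * (2 * ‖e‖ ^ 2 + 2 * D0)) :=
            mul_le_mul_of_nonneg_left
              (mul_le_mul_of_nonneg_left hyy0 (sq_nonneg L)) hrpos
      have h2 : ‖Bbar y - Bbar xstar‖ ^ 2 ≤ L ^ 2 * ‖e‖ ^ 2 := by
        nlinarith [hvbarnorm, norm_nonneg (Bbar y - Bbar xstar), norm_nonneg e,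
          mul_nonneg hL.le (norm_nonneg e)]
      have hexp1 : r * (L ^ 2 * (2 * ‖e‖ ^ 2 + 2 * D0))
          = 2 * r * L ^ 2 * ‖e‖ ^ 2 + 2 * r * L ^ 2 * D0 := by ring
      have hexp2 : (1 + 2 * r) * L ^ 2 * ‖e‖ ^ 2 + 2 * r * L ^ 2 * D0
          = L ^ 2 * ‖e‖ ^ 2 + (2 * r * L ^ 2 * ‖e‖ ^ 2 + 2 * r * L ^ 2 * D0) := by ring
      linarith [hvar, h1, h2, hexp1, hexp2]
    calc ∑ i, q i * ‖Fst y i - xstar‖ ^ 2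
        ≤ ∑ i, q i * ‖e - γ • v i‖ ^ 2 :=
          Finset.sum_le_sum fun i _ => mul_le_mul_of_nonneg_left (hFi i) (hq i).le
      _ = ‖e‖ ^ 2 - 2 * γ * ⟪Bbar y - Bbar xstar, e⟫
          + γ ^ 2 * (∑ i, q i * ‖v i‖ ^ 2) := by
          have hsplit : ∑ i, q i * ‖e - γ • v i‖ ^ 2
              = (∑ i, q i) * ‖e‖ ^ 2 - 2 * γ * (∑ i, q i * ⟪v i, e⟫)
                + γ ^ 2 * (∑ i, q i * ‖v i‖ ^ 2) := by
            rw [Finset.sum_mul, Finset.mul_sum, Finset.mul_sum,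
              ← Finset.sum_sub_distrib, ← Finset.sum_add_distrib]
            refine Finset.sum_congr rfl fun i _ => ?_
            rw [hexp i]; ring
          rw [hsplit, hqs, one_mul, hinner]
      _ ≤ c * ‖e‖ ^ 2 + K := by
          have h1 : γ ^ 2 * (∑ i, q i * ‖v i‖ ^ 2)
              ≤ γ ^ 2 * ((1 + 2 * r) * L ^ 2 * ‖e‖ ^ 2 + 2 * r * L ^ 2 * D0) :=
            mul_le_mul_of_nonneg_left hSbound (sq_nonneg γ)
          have h2 : 2 * γ * (μ * ‖e‖ ^ 2) ≤ 2 * γ * ⟪Bbar y - Bbar xstar, e⟫ :=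
            mul_le_mul_of_nonneg_left hmono' (by linarith)
          rw [hc, hKdef]; nlinarith [h1, h2]
      _ = c * ‖y - xstar‖ ^ 2 + K := by rw [he]
  -- deterministic recursion bound
  have hmain := my_Zseq_sum_le Fst y0 q (fun i => (hq i).le) hqs
    (fun a => ‖a - xstar‖ ^ 2) (fun a => sq_nonneg _) c K hc0 hc1 hKnn hstep M
  have hrealineq : ∑ t : Fin M → Fin m, (∏ j, q (t j)) * ‖Zseq Fst y0 M t - xstar‖ ^ 2
      ≤ (1 - 2 * γ * μ + (1 + 2 * r + 2 * (M:ℝ) * r) * γ ^ 2 * L ^ 2) * D0 := by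
    have hpow : c ^ M ≤ c := by
      calc c ^ M ≤ c ^ 1 := pow_le_pow_of_le_one hc0 hc1 hM
        _ = c := pow_one c
    have h1 : c ^ M * D0 ≤ c * D0 := mul_le_mul_of_nonneg_right hpow hD0nn
    have h2 : (M:ℝ) * K = 2 * (M:ℝ) * r * γ ^ 2 * L ^ 2 * D0 := by rw [hKdef]; ring
    have h3 : (1 - 2 * γ * μ + (1 + 2 * r + 2 * (M:ℝ) * r) * γ ^ 2 * L ^ 2) * D0
        = c * D0 + 2 * (M:ℝ) * r * γ ^ 2 * L ^ 2 * D0 := by rw [hc]; ring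
    calc ∑ t : Fin M → Fin m, (∏ j, q (t j)) * ‖Zseq Fst y0 M t - xstar‖ ^ 2
        ≤ c ^ M * D0 + (M:ℝ) * K := hmain
      _ ≤ (1 - 2 * γ * μ + (1 + 2 * r + 2 * (M:ℝ) * r) * γ ^ 2 * L ^ 2) * D0 := by
          rw [h3]; linarith [h1, h2]
  -- identify the iterates with the deterministic unfolding
  have hmatch : ∀ l, ∀ hl : l ≤ M, ∀ ω,
      ytil l ω = Zseq Fst y0 l (fun j => I (Fin.castLE hl j) ω) := by
    intro l
    induction l with
    | zero => intro hl ω; rw [hytil0]; rfl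
    | succ l ih =>
        intro hl ω
        have hl' : l < M := Nat.lt_of_lt_of_le (Nat.lt_succ_self l) hl
        rw [hytilrec l hl' ω, ih hl'.le ω]
        show proj _ = Zseq Fst y0 (l + 1) _
        simp only [Zseq]
        have e1 : (fun j : Fin l => I (Fin.castLE hl j.castSucc) ω)
            = (fun j : Fin l => I (Fin.castLE hl'.le j) ω) := by
          funext j; congr 1
        have e2 : Fin.castLE hl (Fin.last l) = (⟨l, hl'⟩ : Fin M) := rfl
        rw [hFst]
        simp only [e1, e2]
  have hZform : ∀ ω, ytil M ω = Zseq Fst y0 M (fun j => I j ω) := by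
    intro ω
    rw [hmatch M le_rfl ω]
    congr 1
  -- measure computation
  have hsets : ∀ s : Fin m → Fin m, True := fun _ => trivial
  have hsetm : ∀ s : Fin M → Fin m, MeasurableSet {ω | ∀ j, I j ω = s j} := by
    intro s
    have h : {ω | ∀ j, I j ω = s j} = ⋂ j, (I j) ⁻¹' {s j} := by
      ext ω; simp [Set.mem_iInter, Set.mem_preimage]
    rw [h]
    exact MeasurableSet.iInter fun j => (hImeas j) (measurableSet_singleton _)
  have hmeasval : ∀ s : Fin M → Fin m,
      P {ω | ∀ j, I j ω = s j} = ∏ j, ENNReal.ofReal (q (s j)) := by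
    intro s
    have hset : {ω | ∀ j, I j ω = s j} = ⋂ j ∈ Finset.univ, (I j) ⁻¹' {s j} := by
      ext ω; simp [Set.mem_iInter, Set.mem_preimage]
    have h := hIindep.measure_inter_preimage_eq_mul Finset.univ
      (sets := fun j => ({s j} : Set (Fin m))) (fun j _ => measurableSet_singleton _)
    rw [hset, h]
    refine Finset.prod_congr rfl fun j _ => ?_
    have hpre : (I j) ⁻¹' {s j} = {ω | I j ω = s j} := by ext ω; simp
    rw [hpre, hIdist]
  have hdecomp : (fun ω => ENNReal.ofReal (‖ytil M ω - xstar‖ ^ 2))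
      = fun ω => ∑ s : Fin M → Fin m,
          Set.indicator {ω' | ∀ j, I j ω' = s j}
            (fun _ => ENNReal.ofReal (‖Zseq Fst y0 M s - xstar‖ ^ 2)) ω := by
    funext ω
    rw [Finset.sum_eq_single (fun j => I j ω)]
    · rw [Set.indicator_of_mem (by exact fun j => rfl), hZform ω]
    · intro s _ hs
      apply Set.indicator_of_notMem
      intro hmem
      exact hs (funext fun j => (hmem j).symm)
    · intro h; exact absurd (Finset.mem_univ _) h
  calc ∫⁻ ω, ENNReal.ofReal (‖ytil M ω - xstar‖ ^ 2) ∂P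
      = ∑ s : Fin M → Fin m, ENNReal.ofReal (‖Zseq Fst y0 M s - xstar‖ ^ 2)
          * P {ω | ∀ j, I j ω = s j} := by
        rw [hdecomp, lintegral_finset_sum _
          (fun s _ => (measurable_const.indicator (hsetm s)))]
        exact Finset.sum_congr rfl fun s _ => lintegral_indicator_const (hsetm s) _
    _ = ENNReal.ofReal (∑ s : Fin M → Fin m,
          (∏ j, q (s j)) * ‖Zseq Fst y0 M s - xstar‖ ^ 2) := by
        rw [ENNReal.ofReal_sum_of_nonneg (fun s _ =>
          mul_nonneg (Finset.prod_nonneg fun j _ => (hq _).le) (sq_nonneg _))]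
        refine Finset.sum_congr rfl fun s _ => ?_
        rw [hmeasval s, ← ENNReal.ofReal_prod_of_nonneg (fun j _ => (hq _).le),
          ← ENNReal.ofReal_mul (sq_nonneg _), mul_comm]
    _ ≤ ENNReal.ofReal
          ((1 - 2 * γ * μ + (1 + 2 * r + 2 * M * r) * γ ^ 2 * L ^ 2)
            * ‖y0 - xstar‖ ^ 2) := ENNReal.ofReal_le_ofReal hrealineq
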